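/- (Galois) A quadratic irrational α has a purely periodic continued fraction expansion (i.e. its sequence of partial quotients c₀, c₁, c₂, … satisfies c_{i+l} = c_i for all i ≥ 0 for some period l ≥ 1) if and only if α > 1 and its conjugate ᾱ satisfies −1 < ᾱ < 0. -/

import Mathlib

open Filter

noncomputable section

/-- The Gauss map iterates of `α`. -/
def cfXi (α : ℝ) : ℕ → ℝ
  | 0 => α
  | n + 1 => 1 / Int.fract (cfXi α n)

/-- The `n`-th partial quotient of `α`. -/
def cfA (α : ℝ) (n : ℕ) : ℤ := ⌊cfXi α n⌋

lemma int_linear_zero {A B : ℤ} {x : ℝ} (hx : Irrational x)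
    (h : (A : ℝ) * x + B = 0) : A = 0 ∧ B = 0 := by
  rcases eq_or_ne A 0 with hA | hA
  · refine ⟨hA, ?_⟩
    have : (B : ℝ) = 0 := by rw [hA] at h; push_cast at h; linarith
    exact_mod_cast this
  · exfalso
    have hA' : (A : ℝ) ≠ 0 := Int.cast_ne_zero.mpr hA
    have hxval : x = ((-B / A : ℚ) : ℝ) := by
      push_cast
      field_simp
      linarith
    exact Rat.not_irrational _ (hxval ▸ hx)

variable {α : ℝ}

lemma cfXi_irrational (hirr : Irrational α) : ∀ n, Irrational (cfXi α n)
  | 0 => hirr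
  | n + 1 => by
    have ih := cfXi_irrational hirr n
    have hf : Irrational (Int.fract (cfXi α n)) := by
      unfold Int.fract
      exact Irrational.sub_intCast ih _
    rw [cfXi, one_div]
    exact hf.inv

lemma fract_cfXi_pos (hirr : Irrational α) (n : ℕ) : 0 < Int.fract (cfXi α n) := by
  rcases lt_or_eq_of_le (Int.fract_nonneg (cfXi α n)) with h | h
  · exact h
  · exfalso
    have := cfXi_irrational hirr n
    have h2 : cfXi α n = (⌊cfXi α n⌋ : ℝ) := by
      unfold Int.fract at h
      linarith
    exact (this.ne_int _) h2

lemma fract_cfXi_lt_one (n : ℕ) : Int.fract (cfXi α n) < 1 := Int.fract_lt_one _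

lemma cfXi_succ_gt_one (hirr : Irrational α) (n : ℕ) : 1 < cfXi α (n + 1) := by
  rw [cfXi]
  rw [lt_div_iff₀ (fract_cfXi_pos hirr n)]
  simpa using fract_cfXi_lt_one (α := α) n

lemma cfXi_pos_of_ge_one (hirr : Irrational α) (n : ℕ) : 0 < cfXi α (n + 1) :=
  lt_trans one_pos (cfXi_succ_gt_one hirr n)

lemma cfXi_rec (hirr : Irrational α) (n : ℕ) :
    cfXi α n = (cfA α n : ℝ) + 1 / cfXi α (n + 1) := by
  have h1 : cfXi α (n+1) = 1 / Int.fract (cfXi α n) := rfl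
  have h2 : (0:ℝ) < Int.fract (cfXi α n) := fract_cfXi_pos hirr n
  rw [h1, one_div_one_div]
  unfold cfA
  rw [Int.fract]; ring

lemma cfA_succ_pos (hirr : Irrational α) (n : ℕ) : 1 ≤ cfA α (n + 1) := by
  have := cfXi_succ_gt_one hirr n
  unfold cfA
  exact Int.le_floor.mpr (by exact_mod_cast this.le)

lemma cfXi_diff_lt_one (hirr : Irrational α) {m n : ℕ} (h : cfA α m = cfA α n) :
    |cfXi α m - cfXi α n| < 1 := by
  have h1 := cfXi_rec hirr m
  have h2 := cfXi_rec hirr n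
  have p1 := cfXi_succ_gt_one hirr m
  have p2 := cfXi_succ_gt_one hirr n
  have e1 : (0:ℝ) < 1 / cfXi α (m+1) := by positivity
  have e2 : (0:ℝ) < 1 / cfXi α (n+1) := by positivity
  have e3 : 1 / cfXi α (m+1) < 1 := by
    rw [div_lt_one (by linarith)]; linarith
  have e4 : 1 / cfXi α (n+1) < 1 := by
    rw [div_lt_one (by linarith)]; linarith
  rw [abs_lt]
  constructor <;> [skip; skip] <;>
  · rw [h1, h2, h]
    push_cast
    linarith

lemma cfXi_mul_diff (hirr : Irrational α) {m n : ℕ} (h : cfA α m = cfA α n) :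
    cfXi α (m+1) * cfXi α (n+1) * |cfXi α m - cfXi α n| =
      |cfXi α (m+1) - cfXi α (n+1)| := by
  have h1 := cfXi_rec hirr m
  have h2 := cfXi_rec hirr n
  have p1 := cfXi_succ_gt_one hirr m
  have p2 := cfXi_succ_gt_one hirr n
  have hd : cfXi α m - cfXi α n =
      (cfXi α (n+1) - cfXi α (m+1)) / (cfXi α (m+1) * cfXi α (n+1)) := by
    rw [h1, h2, h]
    push_cast
    field_simp
    ring
  rw [hd, abs_div, abs_of_pos (by positivity : (0:ℝ) < cfXi α (m+1) * cfXi α (n+1))]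
  rw [abs_sub_comm]
  field_simp

lemma cfXi_two_mul_ge (hirr : Irrational α) (n : ℕ) :
    2 ≤ cfXi α (n+1) * cfXi α (n+2) := by
  have h1 := cfXi_rec hirr (n+1)
  have p1 := cfXi_succ_gt_one hirr n
  have p2 := cfXi_succ_gt_one hirr (n+1)
  have ha : (1:ℝ) ≤ (cfA α (n+1) : ℝ) := by exact_mod_cast cfA_succ_pos hirr n
  have hx : (0:ℝ) < cfXi α (n+2) := by linarith
  have : cfXi α (n+1) ≥ 1 + 1 / cfXi α (n+2) := by rw [h1]; linarith
  have h2 : (1 + 1 / cfXi α (n+2)) * cfXi α (n+2) = cfXi α (n+2) + 1 := by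
    field_simp
  nlinarith

/-- If the partial quotients are periodic with period `l`, then `cfXi α l = α`. -/
lemma cfXi_eq_of_periodic (hirr : Irrational α) {l : ℕ} (hl : 1 ≤ l)
    (hA : ∀ i : ℕ, cfA α (i + l) = cfA α i) : cfXi α l = α := by
  set D : ℕ → ℝ := fun n => |cfXi α (n + l) - cfXi α n| with hD
  have hstep : ∀ n, cfXi α (n+1+l) * cfXi α (n+1) * D n = D (n+1) := by
    intro n
    have := cfXi_mul_diff hirr (m := n + l) (n := n) (hA n)
    simpa [hD, show n + l + 1 = n + 1 + l by ring] using this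
  have hlt1 : ∀ n, D n < 1 := fun n => cfXi_diff_lt_one hirr (hA n)
  have hnonneg : ∀ n, 0 ≤ D n := fun n => abs_nonneg _
  have h2step : ∀ n, 4 * D n ≤ D (n + 2) := by
    intro n
    have e1 := hstep n
    have e2 := hstep (n+1)
    have g1 : 2 ≤ cfXi α (n+1) * cfXi α (n+2) := cfXi_two_mul_ge hirr n
    have g2 : 2 ≤ cfXi α (n+1+l) * cfXi α (n+2+l) := by
      have := cfXi_two_mul_ge hirr (n+l)
      rwa [show n+l+1 = n+1+l from by ring, show n+l+2 = n+2+l from by ring] at this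
    have hn := hnonneg n
    have p1 : (0:ℝ) < cfXi α (n+1) := cfXi_pos_of_ge_one hirr n
    have p2 : (0:ℝ) < cfXi α (n+2) := cfXi_pos_of_ge_one hirr (n+1)
    have p3 : (0:ℝ) < cfXi α (n+1+l) := by
      have := cfXi_pos_of_ge_one hirr (n+l)
      rwa [show n+l+1 = n+1+l from by ring] at this
    have p4 : (0:ℝ) < cfXi α (n+2+l) := by
      have := cfXi_pos_of_ge_one hirr (n+1+l)
      rwa [show n+1+l+1 = n+2+l from by ring] at this
    have gprod : 4 ≤ (cfXi α (n+1) * cfXi α (n+2)) * (cfXi α (n+1+l) * cfXi α (n+2+l)) := by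
      nlinarith
    have heq : D (n+1+1) = ((cfXi α (n+1) * cfXi α (n+2)) * (cfXi α (n+1+l) * cfXi α (n+2+l))) * D n := by
      rw [← e2, ← e1]; ring
    have := mul_le_mul_of_nonneg_right gprod hn
    calc 4 * D n ≤ _ := this
      _ = D (n+2) := heq.symm
  have hpow : ∀ m : ℕ, (4:ℝ)^m * D 0 ≤ D (2*m) := by
    intro m
    induction m with
    | zero => simp
    | succ m ih =>
      have h1 := h2step (2*m)
      calc (4:ℝ)^(m+1) * D 0 = 4 * ((4:ℝ)^m * D 0) := by ring
        _ ≤ 4 * D (2*m) := by linarith [hnonneg 0, pow_nonneg (by norm_num : (0:ℝ) ≤ 4) m]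
        _ ≤ D (2*m+2) := h1
        _ = D (2*(m+1)) := by ring_nf
  have hD0 : D 0 = 0 := by
    by_contra hne
    have hpos : 0 < D 0 := lt_of_le_of_ne (hnonneg 0) (Ne.symm hne)
    obtain ⟨m, hm⟩ := pow_unbounded_of_one_lt (1 / D 0) (by norm_num : (1:ℝ) < 4)
    have := hpow m
    have h1 := hlt1 (2*m)
    have : (4:ℝ)^m * D 0 < 1 := lt_of_le_of_lt this h1
    rw [div_lt_iff₀ hpos] at hm
    nlinarith
  have : |cfXi α (0 + l) - cfXi α 0| = 0 := hD0
  rw [abs_eq_zero] at this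
  have : cfXi α (0 + l) = cfXi α 0 := by linarith
  simpa [cfXi] using this

lemma convergent_invariant (hirr : Irrational α) (ha0 : 1 ≤ cfA α 0) :
    ∀ n : ℕ, ∃ p q p' q' : ℤ,
      α * ((q : ℝ) * cfXi α (n+1) + q') = (p : ℝ) * cfXi α (n+1) + p' ∧
      1 ≤ p' ∧ p' ≤ p ∧ 0 ≤ q' ∧ q' ≤ q ∧ 1 ≤ q ∧ 1 ≤ (p - p') + (q - q') := by
  intro n
  induction n with
  | zero =>
    refine ⟨cfA α 0, 1, 1, 0, ?_, le_refl _, ha0, le_refl _, by norm_num, le_refl _, by omega⟩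
    have h0 := cfXi_rec hirr 0
    have hx : (0:ℝ) < cfXi α 1 := cfXi_pos_of_ge_one hirr 0
    have : (cfXi α 0) * cfXi α 1 = ((cfA α 0 : ℝ) + 1 / cfXi α 1) * cfXi α 1 := by rw [← h0]
    have hα0 : cfXi α 0 = α := rfl
    rw [hα0] at this
    push_cast
    field_simp at this ⊢
    linarith
  | succ n ih =>
    obtain ⟨p, q, p', q', heq, hp', hpp, hq', hqq, hq, hsum⟩ := ih
    set c : ℤ := cfA α (n+1) with hc
    have hc1 : 1 ≤ c := cfA_succ_pos hirr n
    have hrec := cfXi_rec hirr (n+1)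
    have hx : (0:ℝ) < cfXi α (n+2) := cfXi_pos_of_ge_one hirr (n+1)
    refine ⟨c * p + p', c * q + q', p, q, ?_, hp'.trans hpp, ?_, ?_, ?_, ?_, ?_⟩
    · have e1 : α * ((q:ℝ) * ((c:ℝ) + 1 / cfXi α (n+2)) + q') =
          (p:ℝ) * ((c:ℝ) + 1 / cfXi α (n+2)) + p' := by rw [← hrec]; exact heq
      have e2 := congrArg (· * cfXi α (n+2)) e1
      push_cast
      field_simp at e2 ⊢
      ring_nf at e2 ⊢
      linarith
    · -- p ≤ c*p + p'
      nlinarith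
    · omega
    · nlinarith
    · nlinarith
    · -- 1 ≤ (c*p + p' - p) + (c*q + q' - q)
      nlinarith

lemma forward_direction {α' : ℝ} {qa qh qb : ℤ} (hqa : qa ≠ 0) (hirr : Irrational α)
    (hroot : (qa : ℝ) * α ^ 2 + (qh : ℝ) * α + (qb : ℝ) = 0)
    (hroot' : (qa : ℝ) * α' ^ 2 + (qh : ℝ) * α' + (qb : ℝ) = 0)
    (hne : α' ≠ α) {l : ℕ} (hl : 1 ≤ l) (hA : ∀ i : ℕ, cfA α (i + l) = cfA α i) :
    1 < α ∧ -1 < α' ∧ α' < 0 := by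
  -- a_0 ≥ 1
  obtain ⟨k, hk⟩ : ∃ k, l = k + 1 := ⟨l - 1, by omega⟩
  have ha0 : 1 ≤ cfA α 0 := by
    have h1 := hA 0
    have h2 : 1 ≤ cfA α l := hk ▸ cfA_succ_pos hirr k
    rw [Nat.zero_add] at h1
    rw [h1] at h2
    exact h2
  -- α > 1
  have halpha : 1 < α := by
    have hf : 0 < Int.fract (cfXi α 0) := fract_cfXi_pos hirr 0
    have : Int.fract (cfXi α 0) = α - (cfA α 0 : ℝ) := rfl
    have ha0' : (1:ℝ) ≤ (cfA α 0 : ℝ) := by exact_mod_cast ha0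
    rw [this] at hf
    linarith
  -- equation from periodicity
  have hper : cfXi α l = α := cfXi_eq_of_periodic hirr hl hA
  obtain ⟨p, q, p', q', heq, hp', hpp, hq', hqq, hq, hsum⟩ := convergent_invariant hirr ha0 k
  rw [← hk, hper] at heq
  -- quadratic: q α² + (q'-p) α - p' = 0
  have hquad : (q:ℝ) * α^2 + ((q' : ℝ) - p) * α - p' = 0 := by nlinarith [heq]
  -- combine with the minimal quadratic
  have hcomb : ((q * qh - qa * (q' - p) : ℤ) : ℝ) * α + ((q * qb + qa * p' : ℤ) : ℝ) = 0 := by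
    push_cast
    linear_combination (q:ℝ) * hroot - (qa:ℝ) * hquad
  obtain ⟨hE1, hE2⟩ := int_linear_zero hirr hcomb
  -- sum of roots
  have hsumroots : (qa : ℝ) * (α + α') + qh = 0 := by
    have hd : α - α' ≠ 0 := sub_ne_zero.mpr (Ne.symm hne)
    have : (α - α') * ((qa : ℝ) * (α + α') + qh) = 0 := by linear_combination hroot - hroot'
    rcases mul_eq_zero.mp this with h | h
    · exact absurd h hd
    · exact h
  have hqa' : (qa : ℝ) ≠ 0 := Int.cast_ne_zero.mpr hqa
  -- q(α+α') = p - q'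
  have hqs : (q:ℝ) * (α + α') = (p:ℝ) - q' := by
    have e1 : (q:ℝ) * qh = (qa:ℝ) * ((q':ℝ) - p) := by
      have : ((q * qh - qa * (q' - p) : ℤ) : ℝ) = 0 := by exact_mod_cast hE1
      push_cast at this
      linarith
    have e2 : (qa:ℝ) * ((q:ℝ) * (α + α')) = (qa:ℝ) * ((p:ℝ) - q') := by
      linear_combination (q:ℝ) * hsumroots - e1
    exact mul_left_cancel₀ hqa' e2
  -- q α α' = -p'
  have hprod : (q:ℝ) * α * α' = -(p':ℝ) := by linear_combination α * hqs - hquad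
  have hq1 : (1:ℝ) ≤ (q:ℝ) := by exact_mod_cast hq
  have hp1 : (1:ℝ) ≤ (p':ℝ) := by exact_mod_cast hp'
  have hneg : α' < 0 := by
    nlinarith [hprod, mul_pos (show (0:ℝ) < (q:ℝ) from by linarith) (show (0:ℝ) < α from by linarith)]
  have hgt : -1 < α' := by
    have hsum' : (1:ℝ) ≤ ((p:ℝ) - p') + ((q:ℝ) - q') := by exact_mod_cast hsum
    nlinarith [hqs, hprod, mul_pos (show (0:ℝ) < (q:ℝ) from by linarith) (show (0:ℝ) < 1 + α from by linarith)]
  exact ⟨halpha, hgt, hneg⟩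

def cfEta (α α' : ℝ) : ℕ → ℝ
  | 0 => α'
  | n + 1 => 1 / (cfEta α α' n - (cfA α n : ℝ))

lemma one_div_mem_of_lt_neg_one {x : ℝ} (h : x < -1) : -1 < 1 / x ∧ 1 / x < 0 := by
  have hx : x < 0 := by linarith
  constructor
  · rw [lt_div_iff_of_neg hx]
    linarith
  · exact div_neg_of_pos_of_neg one_pos hx

lemma cfA_one_le (hirr : Irrational α) (hα : 1 < α) : ∀ n, 1 ≤ cfA α n
  | 0 => by
    unfold cfA
    exact Int.le_floor.mpr (by exact_mod_cast hα.le)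
  | n + 1 => cfA_succ_pos hirr n

lemma cfEta_reduced {α' : ℝ} (hirr : Irrational α) (hα : 1 < α)
    (h1 : -1 < α') (h2 : α' < 0) :
    ∀ n, -1 < cfEta α α' n ∧ cfEta α α' n < 0
  | 0 => ⟨h1, h2⟩
  | n + 1 => by
    obtain ⟨ih1, ih2⟩ := cfEta_reduced hirr hα h1 h2 n
    have ha : (1:ℝ) ≤ (cfA α n : ℝ) := by exact_mod_cast cfA_one_le hirr hα n
    have : cfEta α α' n - (cfA α n : ℝ) < -1 := by linarith
    exact one_div_mem_of_lt_neg_one this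

lemma cfEta_sub_ne {α' : ℝ} (hirr : Irrational α) (hα : 1 < α)
    (h1 : -1 < α') (h2 : α' < 0) (n : ℕ) :
    cfEta α α' n - (cfA α n : ℝ) < -1 := by
  obtain ⟨ih1, ih2⟩ := cfEta_reduced hirr hα h1 h2 n
  have ha : (1:ℝ) ≤ (cfA α n : ℝ) := by exact_mod_cast cfA_one_le hirr hα n
  linarith

lemma cfEta_rec {α' : ℝ} (hirr : Irrational α) (hα : 1 < α)
    (h1 : -1 < α') (h2 : α' < 0) (n : ℕ) :
    cfEta α α' n = (cfA α n : ℝ) + 1 / cfEta α α' (n + 1) := by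
  have hne : cfEta α α' n - (cfA α n : ℝ) ≠ 0 :=
    ne_of_lt (by linarith [cfEta_sub_ne hirr hα h1 h2 n])
  have hdef : cfEta α α' (n+1) = 1 / (cfEta α α' n - (cfA α n : ℝ)) := rfl
  rw [hdef, one_div_one_div]
  ring

lemma cfA_eq_floor_eta {α' : ℝ} (hirr : Irrational α) (hα : 1 < α)
    (h1 : -1 < α') (h2 : α' < 0) (n : ℕ) :
    cfA α n = ⌊-1 / cfEta α α' (n + 1)⌋ := by
  have hrec := cfEta_rec hirr hα h1 h2 n
  have hval : -1 / cfEta α α' (n+1) = (cfA α n : ℝ) + (- cfEta α α' n) := by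
    have : (1:ℝ) / cfEta α α' (n+1) = cfEta α α' n - (cfA α n : ℝ) := by linarith
    have e : (-1 : ℝ) / cfEta α α' (n+1) = -(1 / cfEta α α' (n+1)) := by ring
    rw [e, this]
    ring
  rw [hval]
  obtain ⟨g1, g2⟩ := cfEta_reduced hirr hα h1 h2 n
  have : ⌊(cfA α n : ℝ) + (- cfEta α α' n)⌋ = cfA α n + ⌊- cfEta α α' n⌋ :=
    Int.floor_intCast_add _ _
  rw [this, Int.floor_eq_zero_iff.mpr ⟨by linarith, by linarith⟩]
  simp

lemma quad_root_cases {a h b : ℤ} (ha : a ≠ 0) {x y r : ℝ}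
    (hx : (a:ℝ) * x^2 + h * x + b = 0) (hy : (a:ℝ) * y^2 + h * y + b = 0)
    (hr : (a:ℝ) * r^2 + h * r + b = 0) (hxy : x ≠ y) : r = x ∨ r = y := by
  have haR : (a:ℝ) ≠ 0 := Int.cast_ne_zero.mpr ha
  rcases eq_or_ne r x with h1 | h1
  · exact Or.inl h1
  · right
    have e1 : (r - x) * ((a:ℝ) * (r + x) + h) = 0 := by linear_combination hr - hx
    have e2 : (x - y) * ((a:ℝ) * (x + y) + h) = 0 := by linear_combination hx - hy
    have f1 : (a:ℝ) * (r + x) + h = 0 :=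
      (mul_eq_zero.mp e1).resolve_left (sub_ne_zero.mpr h1)
    have f2 : (a:ℝ) * (x + y) + h = 0 :=
      (mul_eq_zero.mp e2).resolve_left (sub_ne_zero.mpr hxy)
    have : (a:ℝ) * (r - y) = 0 := by linear_combination f1 - f2
    rcases mul_eq_zero.mp this with h' | h'
    · exact absurd h' haR
    · linarith [sub_eq_zero.mp h']

lemma quad_invariant {α' : ℝ} {qa qh qb : ℤ} (hqa : qa ≠ 0) (hirr : Irrational α)
    (hroot : (qa : ℝ) * α ^ 2 + (qh : ℝ) * α + (qb : ℝ) = 0)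
    (hroot' : (qa : ℝ) * α' ^ 2 + (qh : ℝ) * α' + (qb : ℝ) = 0)
    (hα : 1 < α) (h1 : -1 < α') (h2 : α' < 0) :
    ∀ n, ∃ a h b : ℤ, a ≠ 0 ∧
      (a:ℝ) * (cfXi α n)^2 + h * (cfXi α n) + b = 0 ∧
      (a:ℝ) * (cfEta α α' n)^2 + h * (cfEta α α' n) + b = 0 ∧
      h^2 - 4*a*b = qh^2 - 4*qa*qb
  | 0 => ⟨qa, qh, qb, hqa, hroot, hroot', rfl⟩
  | n + 1 => by
    obtain ⟨a, h, b, ha, hxi, heta, hdisc⟩ := quad_invariant hqa hirr hroot hroot' hα h1 h2 n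
    set c : ℤ := cfA α n with hc
    -- new leading coefficient is nonzero
    have hirrn : Irrational (cfXi α n) := cfXi_irrational hirr n
    have hAne : a * c^2 + h * c + b ≠ 0 := by
      intro hA0
      have hAated : (a:ℝ) * (c:ℝ)^2 + h * c + b = 0 := by exact_mod_cast hA0
      have e1 : ((c:ℝ) - cfXi α n) * ((a:ℝ) * ((c:ℝ) + cfXi α n) + h) = 0 := by
        linear_combination hAated - hxi
      have hne1 : (c:ℝ) - cfXi α n ≠ 0 := by
        intro hz
        exact (hirrn.ne_int c) (by linarith)
      have f1 : (a:ℝ) * ((c:ℝ) + cfXi α n) + h = 0 :=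
        (mul_eq_zero.mp e1).resolve_left hne1
      have f2 : ((a : ℤ):ℝ) * cfXi α n + ((a*c + h : ℤ) : ℝ) = 0 := by
        push_cast
        linarith
      exact ha (int_linear_zero hirrn f2).1
    refine ⟨a * c^2 + h * c + b, 2*a*c + h, a, hAne, ?_, ?_, by linear_combination hdisc⟩
    · -- ξ (n+1) is a root
      have hfr : (0:ℝ) < Int.fract (cfXi α n) := fract_cfXi_pos hirr n
      have hdef : cfXi α (n+1) = 1 / Int.fract (cfXi α n) := rfl
      have hxne : cfXi α (n+1) ≠ 0 := by
        have := cfXi_succ_gt_one hirr n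
        linarith
      have hprod : (cfXi α n - (c:ℝ)) * cfXi α (n+1) = 1 := by
        have hcc : (c:ℝ) = (⌊cfXi α n⌋ : ℝ) := by rw [hc]; rfl
        rw [hdef, Int.fract, hcc]
        field_simp
        exact div_self (sub_ne_zero.mpr (fun h => hirrn.ne_int _ h))
      push_cast
      linear_combination (cfXi α (n+1))^2 * hxi -
        ((a:ℝ) + (a:ℝ) * cfXi α (n+1) * ((c:ℝ) + cfXi α n) + (h:ℝ) * cfXi α (n+1)) * hprod
    · -- η (n+1) is a root
      have hdef : cfEta α α' (n+1) = 1 / (cfEta α α' n - (c:ℝ)) := rfl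
      have hlt := cfEta_sub_ne hirr hα h1 h2 n
      have hyne : cfEta α α' (n+1) ≠ 0 := by
        have := (one_div_mem_of_lt_neg_one hlt).2
        rw [← hdef] at this
        linarith
      have hprod : (cfEta α α' n - (c:ℝ)) * cfEta α α' (n+1) = 1 := by
        rw [hdef]
        have : cfEta α α' n - (c:ℝ) ≠ 0 := ne_of_lt (by linarith)
        field_simp
      push_cast
      linear_combination (cfEta α α' (n+1))^2 * heta -
        ((a:ℝ) + (a:ℝ) * cfEta α α' (n+1) * ((c:ℝ) + cfEta α α' n) + (h:ℝ) * cfEta α α' (n+1)) * hprod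

lemma int_abs_bounds {z D : ℤ} (h : z^2 < D) : -D ≤ z ∧ z ≤ D := by
  constructor <;> nlinarith [sq_nonneg (z-1), sq_nonneg (z+1)]

lemma quad_bounds {a h b D : ℤ} {x y : ℝ} (ha : a ≠ 0)
    (hx : (a:ℝ) * x^2 + h * x + b = 0) (hy : (a:ℝ) * y^2 + h * y + b = 0)
    (hd : h^2 - 4*a*b = D) (hx1 : 1 < x) (hy1 : -1 < y) (hy2 : y < 0) :
    a^2 < D ∧ h^2 < D ∧ b^2 < D := by
  have haR : (a:ℝ) ≠ 0 := Int.cast_ne_zero.mpr ha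
  have hxy : x - y > 1 := by linarith
  have hV : (a:ℝ) * (x + y) + h = 0 := by
    have e : (x - y) * ((a:ℝ) * (x + y) + h) = 0 := by linear_combination hx - hy
    rcases mul_eq_zero.mp e with h' | h'
    · linarith
    · exact h'
  have hh : (h:ℝ) = -(a:ℝ) * (x + y) := by linarith
  have hb : (b:ℝ) = (a:ℝ) * x * y := by linear_combination hx - x * hV
  have hDcast : ((D:ℤ):ℝ) = (h:ℝ)^2 - 4 * a * b := by exact_mod_cast congrArg (Int.cast : ℤ → ℝ) hd.symm
  have hDR : (D:ℝ) = (a:ℝ)^2 * (x - y)^2 := by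
    rw [hDcast, hh, hb]; ring
  have ha2 : (0:ℝ) < (a:ℝ)^2 := by positivity
  refine ⟨?_, ?_, ?_⟩
  · have hxy2 : (1:ℝ) < (x-y)^2 := by nlinarith
    have : ((a:ℤ):ℝ)^2 < (D:ℝ) := by
      push_cast
      nlinarith [mul_lt_mul_of_pos_left hxy2 ha2, hDR]
    exact_mod_cast this
  · have hip : (x+y)^2 < (x-y)^2 := by
      nlinarith [mul_neg_of_pos_of_neg (show (0:ℝ) < x by linarith) hy2]
    have : ((h:ℤ):ℝ)^2 < (D:ℝ) := by
      rw [hh]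
      nlinarith [mul_lt_mul_of_pos_left hip ha2, hDR]
    exact_mod_cast this
  · have hu1 : (0:ℝ) < x * (-y) := mul_pos (by linarith) (by linarith)
    have hu2 : x * (-y) < x - y := by nlinarith
    have hu3 : (x * (-y))^2 < (x-y)^2 := by nlinarith
    have : ((b:ℤ):ℝ)^2 < (D:ℝ) := by
      rw [hb]
      nlinarith [mul_lt_mul_of_pos_left hu3 ha2, hDR]
    exact_mod_cast this

lemma backward_direction {α' : ℝ} {qa qh qb : ℤ} (hqa : qa ≠ 0) (hirr : Irrational α)
    (hroot : (qa : ℝ) * α ^ 2 + (qh : ℝ) * α + (qb : ℝ) = 0)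
    (hroot' : (qa : ℝ) * α' ^ 2 + (qh : ℝ) * α' + (qb : ℝ) = 0)
    (hα : 1 < α) (h1 : -1 < α') (h2 : α' < 0) :
    ∃ l : ℕ, 1 ≤ l ∧ ∀ i : ℕ, cfA α (i + l) = cfA α i := by
  set D : ℤ := qh^2 - 4*qa*qb with hD
  choose A H B hA0 hAxi hAeta hAdisc using quad_invariant hqa hirr hroot hroot' hα h1 h2
  have hred : ∀ n, 1 < cfXi α n ∧ -1 < cfEta α α' n ∧ cfEta α α' n < 0 := by
    intro n
    rcases n with _ | n
    · exact ⟨hα, h1, h2⟩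
    · exact ⟨cfXi_succ_gt_one hirr n, (cfEta_reduced hirr hα h1 h2 (n+1)).1,
        (cfEta_reduced hirr hα h1 h2 (n+1)).2⟩
  have hbounds : ∀ n, (A n)^2 < D ∧ (H n)^2 < D ∧ (B n)^2 < D := fun n =>
    quad_bounds (hA0 n) (hAxi n) (hAeta n) (hAdisc n) (hred n).1 (hred n).2.1 (hred n).2.2
  have hmem : ∀ n, (A n, H n, B n) ∈ Finset.Icc ((-D, -D, -D) : ℤ×ℤ×ℤ) (D, D, D) := by
    intro n
    obtain ⟨b1, b2, b3⟩ := hbounds n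
    obtain ⟨a1, a2⟩ := int_abs_bounds b1
    obtain ⟨c1, c2⟩ := int_abs_bounds b2
    obtain ⟨d1, d2⟩ := int_abs_bounds b3
    rw [Finset.mem_Icc]
    exact ⟨⟨a1, c1, d1⟩, ⟨a2, c2, d2⟩⟩
  obtain ⟨m0, n0, hmn, heqg⟩ := Finite.exists_ne_map_eq_of_infinite
    (fun n : ℕ => (⟨(A n, H n, B n), hmem n⟩ : ↥(Finset.Icc ((-D, -D, -D) : ℤ×ℤ×ℤ) (D, D, D))))
  have heqtriple : ∀ m n : ℕ, m < n → (A m, H m, B m) = (A n, H n, B n) →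
      ∃ l : ℕ, 1 ≤ l ∧ ∀ i : ℕ, cfA α (i + l) = cfA α i := by
    intro m n hlt htrip
    obtain ⟨hAe, hHe, hBe⟩ : A m = A n ∧ H m = H n ∧ B m = B n := by
      simpa [Prod.ext_iff] using htrip
    set t : ℕ := n - m with ht
    have hn : n = m + t := by omega
    have ht1 : 1 ≤ t := by omega
    -- ξ n and η n are roots of the quadratic at m
    have hxin : (A m : ℝ) * (cfXi α n)^2 + H m * cfXi α n + B m = 0 := by
      rw [hAe, hHe, hBe]; exact hAxi n
    have hetan : (A m : ℝ) * (cfEta α α' n)^2 + H m * cfEta α α' n + B m = 0 := by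
      rw [hAe, hHe, hBe]; exact hAeta n
    have hxyne : cfXi α m ≠ cfEta α α' m := by
      have := (hred m).1; have := (hred m).2.2; intro h; linarith
    have hxi_eq : cfXi α n = cfXi α m := by
      rcases quad_root_cases (hA0 m) (hAxi m) (hAeta m) hxin hxyne with h | h
      · exact h
      · exfalso; have := (hred n).1; have := (hred m).2.2; linarith
    have heta_eq : cfEta α α' n = cfEta α α' m := by
      rcases quad_root_cases (hA0 m) (hAxi m) (hAeta m) hetan hxyne with h | h
      · exfalso; have := (hred n).2.2; have := (hred m).1; linarith
      · exact h
    -- back-propagation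
    have backstep : ∀ k : ℕ, cfXi α (k+1) = cfXi α (k+1+t) →
        cfEta α α' (k+1) = cfEta α α' (k+1+t) →
        cfXi α k = cfXi α (k+t) ∧ cfEta α α' k = cfEta α α' (k+t) := by
      intro k e1 e2
      have harith : k + t + 1 = k + 1 + t := by omega
      have hak : cfA α k = cfA α (k+t) := by
        rw [cfA_eq_floor_eta hirr hα h1 h2 k, cfA_eq_floor_eta hirr hα h1 h2 (k+t),
          harith, e2]
      constructor
      · rw [cfXi_rec hirr k, cfXi_rec hirr (k+t), hak, harith, e1]
      · rw [cfEta_rec hirr hα h1 h2 k, cfEta_rec hirr hα h1 h2 (k+t), hak, harith, e2]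
    have hback : ∀ i : ℕ, cfXi α (m - i) = cfXi α (m - i + t) ∧
        cfEta α α' (m - i) = cfEta α α' (m - i + t) := by
      intro i
      induction i with
      | zero =>
        have e0 : m - 0 = m := rfl
        rw [e0, ← hn]
        exact ⟨hxi_eq.symm, heta_eq.symm⟩
      | succ i ih =>
        rcases Nat.eq_zero_or_pos (m - i) with hz | hp
        · have e : m - (i+1) = m - i := by omega
          rw [e]; exact ih
        · have hk : m - i = (m - (i+1)) + 1 := by omega
          rw [hk] at ih
          exact backstep _ ih.1 ih.2
    have h0 : cfXi α 0 = cfXi α t := by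
      have := (hback m).1
      rw [Nat.sub_self] at this
      simpa using this
    have hfwd : ∀ i : ℕ, cfXi α i = cfXi α (i + t) := by
      intro i
      induction i with
      | zero => simpa using h0
      | succ i ih =>
        have e1 : cfXi α (i+1) = 1 / Int.fract (cfXi α i) := rfl
        have e2 : cfXi α (i+t+1) = 1 / Int.fract (cfXi α (i+t)) := rfl
        have harith : i + 1 + t = i + t + 1 := by omega
        rw [harith, e1, e2, ih]
    exact ⟨t, ht1, fun i => by unfold cfA; rw [← hfwd i]⟩
  rcases lt_or_gt_of_ne hmn with hlt | hlt
  · exact heqtriple m0 n0 hlt (by simpa [Subtype.ext_iff] using heqg)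
  · exact heqtriple n0 m0 hlt (by simpa [Subtype.ext_iff] using heqg.symm)

/-- Galois: A quadratic irrational `α` has a purely periodic continued
fraction expansion if and only if `α > 1` and its conjugate `ᾱ` satisfies `-1 < ᾱ < 0`. -/
theorem galois_pure_periodic_iff
    (α α' : ℝ) (qa qh qb : ℤ) (hqa : qa ≠ 0) (hirr : Irrational α)
    (hroot : (qa : ℝ) * α ^ 2 + (qh : ℝ) * α + (qb : ℝ) = 0)
    (hroot' : (qa : ℝ) * α' ^ 2 + (qh : ℝ) * α' + (qb : ℝ) = 0)
    (hne : α' ≠ α) :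
    (∃ l : ℕ, 1 ≤ l ∧ ∀ i : ℕ, cfA α (i + l) = cfA α i) ↔
      (1 < α ∧ -1 < α' ∧ α' < 0) := by
  constructor
  · rintro ⟨l, hl, hA⟩
    exact forward_direction hqa hirr hroot hroot' hne hl hA
  · rintro ⟨g1, g2, g3⟩
    exact backward_direction hqa hirr hroot hroot' g1 g2 g3

end
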